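/- For the Pham–Prince functional 𝓔(u,C,L) = Σ_{k=1}^K Σ_{j∈G} uₖ(j)² (F(j) − L(j)Cₖ)² + γ₁ Σ_{j∈G} ‖(∇L)(j)‖₂² + γ₂ Σ_{j∈G} ‖(∇²L)(j)‖₂², if F(j) > 0 for all j ∈ G, then the infimum of 𝓔 over all u : G → ℝ^K with u(j) ∈ Δ_K for all j, C ∈ ℝ^K and L : G → ℝ equals 0. (Proof via the sequence L_r := F/r, Cₖ := r, with u arbitrary, as r → ∞.) -/

import Mathlib

open Finset

noncomputable section

/-- Discrete gradient with forward differences and mirror boundary conditions. -/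
def grad {d : ℕ} (n : Fin d → ℕ) (F : (∀ i, Fin (n i)) → ℝ)
    (j : ∀ i, Fin (n i)) (i : Fin d) : ℝ :=
  if h : (j i : ℕ) + 1 < n i then F (Function.update j i ⟨(j i : ℕ) + 1, h⟩) - F j else 0

/-- Discrete Hessian: the discrete gradient applied to each component of the gradient. -/
def hess {d : ℕ} (n : Fin d → ℕ) (F : (∀ i, Fin (n i)) → ℝ)
    (j : ∀ i, Fin (n i)) (i i' : Fin d) : ℝ :=
  grad n (fun j' => grad n F j' i') j i

/-- The label assignment `u` takes values in the probability simplex `Δ_K`. -/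
def inSimplex {G : Type*} [Fintype G] {K : ℕ} (u : G → Fin K → ℝ) : Prop :=
  ∀ j, (∀ k, 0 ≤ u j k) ∧ ∑ k, u j k = 1

/-- The Pham–Prince functional. -/
def phamE {d K : ℕ} (n : Fin d → ℕ) (F : (∀ i, Fin (n i)) → ℝ) (γ₁ γ₂ : ℝ)
    (u : (∀ i, Fin (n i)) → Fin K → ℝ) (C : Fin K → ℝ) (L : (∀ i, Fin (n i)) → ℝ) : ℝ :=
  (∑ k, ∑ j, u j k ^ 2 * (F j - L j * C k) ^ 2)
    + γ₁ * ∑ j, ∑ i, grad n L j i ^ 2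
    + γ₂ * ∑ j, ∑ i, ∑ i', hess n L j i i' ^ 2

lemma grad_mul_const {d : ℕ} (n : Fin d → ℕ) (F : (∀ i, Fin (n i)) → ℝ) (c : ℝ)
    (j : ∀ i, Fin (n i)) (i : Fin d) :
    grad n (fun j' => F j' * c) j i = grad n F j i * c := by
  unfold grad
  split <;> ring

lemma hess_mul_const {d : ℕ} (n : Fin d → ℕ) (F : (∀ i, Fin (n i)) → ℝ) (c : ℝ)
    (j : ∀ i, Fin (n i)) (i i' : Fin d) :
    hess n (fun j' => F j' * c) j i i' = hess n F j i i' * c := by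
  unfold hess
  rw [show (fun j' => grad n (fun j'' => F j'' * c) j' i') = fun j' => grad n F j' i' * c
    from funext fun j' => grad_mul_const n F c j' i']
  exact grad_mul_const n _ c j i

theorem phamE_inf_eq_zero (d K : ℕ) (hd : 1 ≤ d) (hK : 1 ≤ K)
    (n : Fin d → ℕ) (hn : ∀ i, 0 < n i)
    (F : (∀ i, Fin (n i)) → ℝ) (hF : ∀ j, 0 < F j)
    (γ₁ γ₂ : ℝ) (hγ₁ : 0 < γ₁) (hγ₂ : 0 < γ₂) :
    sInf {y : ℝ | ∃ (u : (∀ i, Fin (n i)) → Fin K → ℝ) (C : Fin K → ℝ)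
      (L : (∀ i, Fin (n i)) → ℝ), inSimplex u ∧ phamE n F γ₁ γ₂ u C L = y} = 0 := by
  set S := {y : ℝ | ∃ (u : (∀ i, Fin (n i)) → Fin K → ℝ) (C : Fin K → ℝ)
      (L : (∀ i, Fin (n i)) → ℝ), inSimplex u ∧ phamE n F γ₁ γ₂ u C L = y} with hS
  have hK0 : (K : ℝ) ≠ 0 := by
    have : 0 < K := hK
    positivity
  -- u is the uniform assignment
  set u : (∀ i, Fin (n i)) → Fin K → ℝ := fun _ _ => (K : ℝ)⁻¹ with hu
  have hsimp : inSimplex u := by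
    intro j
    constructor
    · intro k; positivity
    · simp [hu, Finset.sum_const, mul_comm]
      field_simp
  -- constants
  set A : ℝ := ∑ j, ∑ i, grad n F j i ^ 2 with hA
  set B : ℝ := ∑ j, ∑ i, ∑ i', hess n F j i i' ^ 2 with hB
  set M : ℝ := γ₁ * A + γ₂ * B with hM
  have hA0 : 0 ≤ A := Finset.sum_nonneg fun j _ => Finset.sum_nonneg fun i _ => sq_nonneg _
  have hB0 : 0 ≤ B := Finset.sum_nonneg fun j _ => Finset.sum_nonneg fun i _ =>
    Finset.sum_nonneg fun i' _ => sq_nonneg _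
  -- every element of S is nonnegative
  have hS0 : ∀ y ∈ S, (0:ℝ) ≤ y := by
    rintro y ⟨u', C', L', _, rfl⟩
    unfold phamE
    have h1 : (0:ℝ) ≤ ∑ k, ∑ j, u' j k ^ 2 * (F j - L' j * C' k) ^ 2 :=
      Finset.sum_nonneg fun k _ => Finset.sum_nonneg fun j _ => by positivity
    have h2 : (0:ℝ) ≤ ∑ j, ∑ i, grad n L' j i ^ 2 :=
      Finset.sum_nonneg fun j _ => Finset.sum_nonneg fun i _ => sq_nonneg _
    have h3 : (0:ℝ) ≤ ∑ j, ∑ i, ∑ i', hess n L' j i i' ^ 2 :=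
      Finset.sum_nonneg fun j _ => Finset.sum_nonneg fun i _ =>
        Finset.sum_nonneg fun i' _ => sq_nonneg _
    exact add_nonneg (add_nonneg h1 (mul_nonneg hγ₁.le h2)) (mul_nonneg hγ₂.le h3)
  have hbdd : BddBelow S := ⟨0, fun y hy => hS0 y hy⟩
  -- for each r, the value M * ((r+1)⁻¹)^2 is attained
  have hmem : ∀ r : ℕ, M * (((r:ℝ)+1)⁻¹)^2 ∈ S := by
    intro r
    set c : ℝ := ((r:ℝ)+1)⁻¹ with hc
    have hr0 : ((r:ℝ)+1) ≠ 0 := by positivity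
    refine ⟨u, fun _ => (r:ℝ)+1, fun j => F j * c, hsimp, ?_⟩
    unfold phamE
    have hfid : ∀ k : Fin K, ∑ j, u j k ^ 2 * (F j - (F j * c) * ((r:ℝ)+1)) ^ 2 = 0 := by
      intro k
      refine Finset.sum_eq_zero fun j _ => ?_
      have : F j - (F j * c) * ((r:ℝ)+1) = 0 := by
        rw [hc]; field_simp; ring
      rw [this]; ring
    rw [Finset.sum_eq_zero fun k _ => hfid k]
    have hg : ∑ j, ∑ i, grad n (fun j' => F j' * c) j i ^ 2 = A * c ^ 2 := by
      rw [hA, Finset.sum_mul]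
      refine Finset.sum_congr rfl fun j _ => ?_
      rw [Finset.sum_mul]
      refine Finset.sum_congr rfl fun i _ => ?_
      rw [grad_mul_const]; ring
    have hh : ∑ j, ∑ i, ∑ i', hess n (fun j' => F j' * c) j i i' ^ 2 = B * c ^ 2 := by
      rw [hB, Finset.sum_mul]
      refine Finset.sum_congr rfl fun j _ => ?_
      rw [Finset.sum_mul]
      refine Finset.sum_congr rfl fun i _ => ?_
      rw [Finset.sum_mul]
      refine Finset.sum_congr rfl fun i' _ => ?_
      rw [hess_mul_const]; ring
    rw [hg, hh, hM]
    ring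
  have hne : S.Nonempty := ⟨_, hmem 0⟩
  refine le_antisymm ?_ (le_csInf hne fun y hy => hS0 y hy)
  -- sInf S ≤ 0 via the tendsto argument
  have htend : Filter.Tendsto (fun r : ℕ => M * (((r:ℝ)+1)⁻¹)^2) Filter.atTop (nhds 0) := by
    have h1 : Filter.Tendsto (fun r : ℕ => ((r:ℝ)+1)⁻¹) Filter.atTop (nhds 0) := by
      simpa only [one_div] using (tendsto_one_div_add_atTop_nhds_zero_nat :
        Filter.Tendsto (fun n : ℕ => 1 / ((n:ℝ) + 1)) Filter.atTop (nhds 0))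
    have := (h1.pow 2).const_mul M
    simpa using this
  exact ge_of_tendsto' htend fun r => csInf_le hbdd (hmem r)
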